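/- Let D be a distribution on real values a_1 < ... < a_k with pmf p and tail CDF q_c = \sum_{b \ge c} p_b, and let \delta \in (0,1). For each c \in [k], suppose we observe m_c i.i.d. censored samples of the form \min(X, a_c) with X \sim D, all samples mutually independent; let n_c = \sum_{b \ge c} m_b be the effective number of samples at level c (every sample censored at level b \ge c yields a sample of \min(X, a_c)), let \hat{p}_c be the fraction of these n_c effective samples that equal a_c (equivalently, whose underlying X satisfies X \ge a_c), and set \epsilon_c = \sqrt{\log(2k/\delta)/(2 n_c)}. Let E = E_k be the output of the censored-feedback recursion with inputs \hat{p}_c and \epsilon_c. Then with probability at least 1 - \delta: (i) E stochastically dominates p, i.e. \sum_{j \ge b} E(j) \ge \sum_{j \ge b} p_j for every b \in [k]; and (ii) for every c \in [k], the total variation distance between the truncation of E at a_c and the truncation D_c of p at a_c is less than k \sqrt{2 \log(2k/\delta)/m_c}. -/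

import Mathlib

open Finset MeasureTheory ProbabilityTheory

/-- The censored-feedback recursion. -/
noncomputable def censoredRec (phat eps : ℕ → ℝ) : ℕ → ℕ → ℝ
  | 0 => fun _ => 0
  | 1 => fun b => if b = 1 then 1 else 0
  | (c + 2) => fun b =>
      if b = c + 2 then min (censoredRec phat eps (c + 1) (c + 1)) (phat (c + 2) + eps (c + 2))
      else if b = c + 1 then
        censoredRec phat eps (c + 1) (c + 1)
          - min (censoredRec phat eps (c + 1) (c + 1)) (phat (c + 2) + eps (c + 2))
      else censoredRec phat eps (c + 1) b

/-- The truncation at level `c` of a probability vector `p` on `{1, …, k}`: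
the distribution of `min(X, a_c)`, i.e. `D_c j = p j` for `j < c` and `D_c c = q_c`. -/
noncomputable def truncAt (p : ℕ → ℝ) (k c : ℕ) : ℕ → ℝ :=
  fun j => if j = c then ∑ b ∈ Finset.Icc c k, p b else p j


section Aux
open Real MeasureTheory ProbabilityTheory Finset

lemma bernoulli_mgf_le (q t : ℝ) (hq0 : 0 ≤ q) (hq1 : q ≤ 1) :
    (1 - q) + q * Real.exp t ≤ Real.exp (q * t + t ^ 2 / 8) := by
  rcases hq0.eq_or_lt with h0 | h0
  · subst h0
    simpa using Real.one_le_exp (by positivity)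
  -- q > 0
  have hg : ∀ x : ℝ, 0 < (1 - q) + q * Real.exp x := fun x =>
    add_pos_of_nonneg_of_pos (by linarith) (by positivity)
  set φ : ℝ → ℝ := fun x => q * x + x ^ 2 / 8 - Real.log ((1 - q) + q * Real.exp x) with hφ
  set ψ : ℝ → ℝ := fun x => q + x / 4 - q * Real.exp x / ((1 - q) + q * Real.exp x) with hψ
  have hgd : ∀ x : ℝ, HasDerivAt (fun y => (1 - q) + q * Real.exp y) (q * Real.exp x) x := by
    intro x
    simpa using ((Real.hasDerivAt_exp x).const_mul q).const_add (1 - q)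
  have hφd : ∀ x : ℝ, HasDerivAt φ (ψ x) x := by
    intro x
    have h1 : HasDerivAt (fun y : ℝ => q * y + y ^ 2 / 8) (q + x * 2 / 8) x := by
      have := ((hasDerivAt_id x).const_mul q).fun_add
        (((hasDerivAt_pow 2 x)).div_const 8)
      simpa [mul_comm] using this
    have h2 : HasDerivAt (fun y => Real.log ((1 - q) + q * Real.exp y))
        (q * Real.exp x / ((1 - q) + q * Real.exp x)) x := (hgd x).log (hg x).ne'
    have := h1.fun_sub h2
    refine this.congr_deriv ?_
    simp [hψ]
    ring
  have hψd : ∀ x : ℝ, HasDerivAt ψ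
      (1 / 4 - q * Real.exp x * (1 - q) / ((1 - q) + q * Real.exp x) ^ 2) x := by
    intro x
    have h1 : HasDerivAt (fun y : ℝ => q + y / 4) (1 / 4) x := by
      simpa using ((hasDerivAt_id x).div_const 4).const_add q
    have h2 : HasDerivAt (fun y => q * Real.exp y / ((1 - q) + q * Real.exp y))
        ((q * Real.exp x * ((1 - q) + q * Real.exp x) - q * Real.exp x * (q * Real.exp x)) /
          ((1 - q) + q * Real.exp x) ^ 2) x := by
      exact ((Real.hasDerivAt_exp x).const_mul q).div (hgd x) (hg x).ne'
    have := h1.fun_sub h2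
    refine this.congr_deriv ?_
    field_simp
    ring
  have hψ0 : ∀ x : ℝ, 0 ≤ 1 / 4 - q * Real.exp x * (1 - q) / ((1 - q) + q * Real.exp x) ^ 2 := by
    intro x
    have hgx := hg x
    rw [sub_nonneg, div_le_iff₀ (by positivity)]
    nlinarith [sq_nonneg ((1 - q) - q * Real.exp x), Real.exp_pos x]
  have hψmono : Monotone ψ := by
    apply monotone_of_deriv_nonneg
    · exact fun x => (hψd x).differentiableAt
    · intro x
      rw [(hψd x).deriv]
      exact hψ0 x
  have hψzero : ψ 0 = 0 := by
    simp [hψ]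
  have hφ0 : φ 0 = 0 := by
    simp [hφ]
  have key : ∀ x : ℝ, 0 ≤ φ x := by
    intro x
    rcases le_total 0 x with hx | hx
    · have : MonotoneOn φ (Set.Ici 0) := by
        apply monotoneOn_of_deriv_nonneg (convex_Ici 0)
        · exact Continuous.continuousOn (by
            fun_prop (disch := intro x; exact (hg x).ne'))
        · intro y hy
          exact (hφd y).differentiableAt.differentiableWithinAt
        · intro y hy
          rw [(hφd y).deriv]
          rw [interior_Ici] at hy
          calc (0:ℝ) = ψ 0 := hψzero.symm
          _ ≤ ψ y := hψmono (le_of_lt hy)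
      have := this (Set.self_mem_Ici) (Set.mem_Ici.2 hx) hx
      rwa [hφ0] at this
    · have : AntitoneOn φ (Set.Iic 0) := by
        apply antitoneOn_of_deriv_nonpos (convex_Iic 0)
        · exact Continuous.continuousOn (by
            fun_prop (disch := intro x; exact (hg x).ne'))
        · intro y hy
          exact (hφd y).differentiableAt.differentiableWithinAt
        · intro y hy
          rw [(hφd y).deriv]
          rw [interior_Iic] at hy
          calc ψ y ≤ ψ 0 := hψmono (le_of_lt hy)
          _ = 0 := hψzero
      have := this (Set.mem_Iic.2 hx) (Set.self_mem_Iic) hx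
      rwa [hφ0] at this
  have hlog : Real.log ((1 - q) + q * Real.exp t) ≤ q * t + t ^ 2 / 8 := by
    have := key t
    simp only [hφ] at this
    linarith
  calc (1 - q) + q * Real.exp t = Real.exp (Real.log ((1 - q) + q * Real.exp t)) :=
        (Real.exp_log (hg t)).symm
  _ ≤ _ := Real.exp_le_exp.2 hlog

lemma chernoff_bernoulli {Ω : Type*} [MeasurableSpace Ω] {P : Measure Ω} [IsProbabilityMeasure P]
    {ι : Type*} {Z : ι → Ω → ℝ}
    (hindep : iIndepFun Z P)
    (hmeas : ∀ i, Measurable (Z i))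
    (hbd0 : ∀ i ω, 0 ≤ Z i ω) (hbd1 : ∀ i ω, Z i ω ≤ 1)
    (T : Finset ι) {q : ℝ} (hq0 : 0 ≤ q) (hq1 : q ≤ 1)
    (hmgf : ∀ i ∈ T, ∀ t : ℝ, mgf (Z i) P t = (1 - q) + q * Real.exp t)
    {ε : ℝ} (hε : 0 ≤ ε) :
    P {ω | (T.card : ℝ) * (q + ε) ≤ ∑ i ∈ T, Z i ω} ≤
      ENNReal.ofReal (Real.exp (-(2 * T.card * ε ^ 2))) ∧
    P {ω | ∑ i ∈ T, Z i ω ≤ (T.card : ℝ) * (q - ε)} ≤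
      ENNReal.ofReal (Real.exp (-(2 * T.card * ε ^ 2))) := by
  classical
  set n : ℕ := T.card with hn
  set S : Ω → ℝ := ∑ i ∈ T, Z i with hS
  have hSapp : ∀ ω, S ω = ∑ i ∈ T, Z i ω := fun ω => by simp [hS]
  have hSmeas : Measurable S := by
    rw [hS]
    have := Finset.measurable_sum T fun i (_ : i ∈ T) => hmeas i
    convert this using 1
    ext ω; simp
  have hS0 : ∀ ω, 0 ≤ S ω := fun ω => by
    rw [hSapp]; exact Finset.sum_nonneg fun i _ => hbd0 i ω
  have hSn : ∀ ω, S ω ≤ (n : ℝ) := fun ω => by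
    rw [hSapp]
    calc ∑ i ∈ T, Z i ω ≤ ∑ i ∈ T, (1 : ℝ) :=
          Finset.sum_le_sum fun i _ => hbd1 i ω
    _ = (n : ℝ) := by simp [hn]
  have hint : ∀ t : ℝ, Integrable (fun ω => Real.exp (t * S ω)) P := by
    intro t
    refine Integrable.mono' (integrable_const (Real.exp (|t| * n))) ?_ ?_
    · exact ((hSmeas.const_mul t).exp).aestronglyMeasurable
    · refine Filter.Eventually.of_forall fun ω => ?_
      rw [Real.norm_eq_abs, abs_of_pos (Real.exp_pos _), Real.exp_le_exp]
      calc t * S ω ≤ |t| * S ω := mul_le_mul_of_nonneg_right (le_abs_self t) (hS0 ω)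
      _ ≤ |t| * n := mul_le_mul_of_nonneg_left (hSn ω) (abs_nonneg t)
  have hmgfS : ∀ t : ℝ, mgf S P t = ((1 - q) + q * Real.exp t) ^ n := by
    intro t
    rw [hS, hindep.mgf_sum hmeas T]
    rw [Finset.prod_congr rfl (fun i hi => hmgf i hi t), Finset.prod_const, hn]
  have hb0 : ∀ t : ℝ, (0:ℝ) ≤ (1 - q) + q * Real.exp t := fun t =>
    add_nonneg (by linarith) (mul_nonneg hq0 (Real.exp_pos t).le)
  have hkey : ∀ t : ℝ, ∀ c : ℝ,
      Real.exp (-t * c) * mgf S P t ≤ Real.exp (-t * c + n * (q * t + t ^ 2 / 8)) := by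
    intro t c
    rw [hmgfS, Real.exp_add]
    refine mul_le_mul_of_nonneg_left ?_ (Real.exp_pos _).le
    calc ((1 - q) + q * Real.exp t) ^ n ≤ (Real.exp (q * t + t ^ 2 / 8)) ^ n :=
          pow_le_pow_left₀ (hb0 t) (bernoulli_mgf_le q t hq0 hq1) n
    _ = Real.exp (n * (q * t + t ^ 2 / 8)) := by
        rw [← Real.exp_nat_mul]
  constructor
  · -- upper tail, t = 4ε
    have h1 := measure_ge_le_exp_mul_mgf (μ := P) (X := S) ((n : ℝ) * (q + ε))
      (t := 4 * ε) (by linarith) (hint _)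
    have h2 := (h1.trans (hkey (4 * ε) ((n : ℝ) * (q + ε))))
    have h3 : -(4 * ε) * ((n : ℝ) * (q + ε)) + n * (q * (4 * ε) + (4 * ε) ^ 2 / 8)
        = -(2 * n * ε ^ 2) := by ring
    rw [h3] at h2
    simp only [hSapp] at h2
    rw [← ENNReal.ofReal_toReal (measure_ne_top P _)]
    exact ENNReal.ofReal_le_ofReal h2
  · have h1 := measure_le_le_exp_mul_mgf (μ := P) (X := S) ((n : ℝ) * (q - ε))
      (t := -(4 * ε)) (by linarith) (hint _)
    have h2 := (h1.trans (hkey (-(4 * ε)) ((n : ℝ) * (q - ε))))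
    have h3 : - -(4 * ε) * ((n : ℝ) * (q - ε)) + n * (q * -(4 * ε) + (-(4 * ε)) ^ 2 / 8)
        = -(2 * n * ε ^ 2) := by ring
    rw [h3] at h2
    simp only [hSapp] at h2
    rw [← ENNReal.ofReal_toReal (measure_ne_top P _)]
    exact ENNReal.ofReal_le_ofReal h2

lemma mgf_indicator_eq {Ω : Type*} [MeasurableSpace Ω] {P : Measure Ω} [IsProbabilityMeasure P]
    {W : Ω → ℝ} (hW : Measurable W)
    {s : Finset ℕ} {w : ℕ → ℝ} (hw : ∀ i ∈ s, 0 ≤ w i) {x : ℕ → ℝ}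
    (hmap : Measure.map W P = ∑ i ∈ s, ENNReal.ofReal (w i) • Measure.dirac (x i))
    (r t : ℝ) :
    mgf (fun ω => if r ≤ W ω then (1 : ℝ) else 0) P t
      = ∑ i ∈ s, w i * Real.exp (t * (if r ≤ x i then (1 : ℝ) else 0)) := by
  have hhm : Measurable (fun y : ℝ => Real.exp (t * (if r ≤ y then (1 : ℝ) else 0))) := by
    apply Measurable.exp
    apply Measurable.const_mul
    exact Measurable.ite (measurableSet_le measurable_const measurable_id)
      measurable_const measurable_const
  have hint : ∀ i ∈ s, Integrable (fun y : ℝ => Real.exp (t * (if r ≤ y then (1 : ℝ) else 0)))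
      (ENNReal.ofReal (w i) • Measure.dirac (x i)) := by
    intro i _
    refine Integrable.smul_measure ?_ ENNReal.ofReal_ne_top
    refine Integrable.mono' (integrable_const (Real.exp |t|)) hhm.aestronglyMeasurable ?_
    refine Filter.Eventually.of_forall fun y => ?_
    rw [Real.norm_eq_abs, abs_of_pos (Real.exp_pos _), Real.exp_le_exp]
    rcases le_or_gt r y with h | h
    · simp only [if_pos h, mul_one]; exact le_abs_self t
    · simp only [if_neg (not_le.2 h), mul_zero]; exact abs_nonneg t
  calc mgf (fun ω => if r ≤ W ω then (1 : ℝ) else 0) P t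
      = ∫ ω, Real.exp (t * (if r ≤ W ω then (1 : ℝ) else 0)) ∂P := rfl
  _ = ∫ y, Real.exp (t * (if r ≤ y then (1 : ℝ) else 0)) ∂(Measure.map W P) := by
      rw [integral_map hW.aemeasurable hhm.aestronglyMeasurable]
  _ = ∑ i ∈ s, ∫ y, Real.exp (t * (if r ≤ y then (1 : ℝ) else 0))
        ∂(ENNReal.ofReal (w i) • Measure.dirac (x i)) := by
      rw [hmap, integral_finset_sum_measure hint]
  _ = ∑ i ∈ s, w i * Real.exp (t * (if r ≤ x i then (1 : ℝ) else 0)) := by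
      refine Finset.sum_congr rfl fun i hi => ?_
      rw [integral_smul_measure, integral_dirac, ENNReal.toReal_ofReal (hw i hi),
        smul_eq_mul]

lemma truncAt_sum_tail (p : ℕ → ℝ) (k c b : ℕ) (hc : 1 ≤ c) (hcb : c ≤ b) (hbk : b ≤ k) :
    ∑ i ∈ Finset.Icc c b, truncAt p k b i = ∑ i ∈ Finset.Icc c k, p i := by
  have h1 : Finset.Icc c b = insert b (Finset.Icc c (b - 1)) := by
    ext y; simp only [Finset.mem_Icc, Finset.mem_insert]; omega
  rw [h1, Finset.sum_insert (by simp only [Finset.mem_Icc]; omega)]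
  have h2 : ∀ i ∈ Finset.Icc c (b - 1), truncAt p k b i = p i := by
    intro i hi
    rw [Finset.mem_Icc] at hi
    rw [truncAt, if_neg (by omega)]
  rw [Finset.sum_congr rfl h2, truncAt, if_pos rfl]
  rw [← Finset.sum_union (by
    rw [Finset.disjoint_left]
    intro y hy1 hy2
    simp only [Finset.mem_Icc] at hy1 hy2
    omega)]
  congr 1
  ext y; simp only [Finset.mem_Icc, Finset.mem_union]; omega

lemma truncAt_sum_head (p : ℕ → ℝ) (k c b : ℕ) (hc : 1 ≤ c) (hcb : c ≤ b) :
    ∑ i ∈ Finset.Icc 1 (c - 1), truncAt p k b i = ∑ i ∈ Finset.Icc 1 (c - 1), p i := by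
  refine Finset.sum_congr rfl fun i hi => ?_
  rw [Finset.mem_Icc] at hi
  rw [truncAt, if_neg (by omega)]

lemma censoredRec_one (f e : ℕ → ℝ) : censoredRec f e 1 1 = 1 := by simp [censoredRec]

lemma censoredRec_succ_self (f e : ℕ → ℝ) (c : ℕ) (hc : 1 ≤ c) :
    censoredRec f e (c + 1) (c + 1) = min (censoredRec f e c c) (f (c + 1) + e (c + 1)) := by
  obtain ⟨d, rfl⟩ : ∃ d, c = d + 1 := ⟨c - 1, by omega⟩
  simp [censoredRec]

lemma censoredRec_succ_lt (f e : ℕ → ℝ) (c b : ℕ) (hb : b < c) :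
    censoredRec f e (c + 1) b = censoredRec f e c b := by
  obtain ⟨d, rfl⟩ : ∃ d, c = d + 1 := ⟨c - 1, by omega⟩
  have h1 : b ≠ d + 2 := by omega
  have h2 : b ≠ d + 1 := by omega
  conv_lhs => rw [censoredRec]
  simp [h1, h2]

lemma censoredRec_succ_eq (f e : ℕ → ℝ) (c : ℕ) (hc : 1 ≤ c) :
    censoredRec f e (c + 1) c
      = censoredRec f e c c - censoredRec f e (c + 1) (c + 1) := by
  obtain ⟨d, rfl⟩ : ∃ d, c = d + 1 := ⟨c - 1, by omega⟩
  rw [censoredRec_succ_self f e (d + 1) (by omega)]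
  conv_lhs => rw [censoredRec]
  simp

lemma censoredRec_tail (f e : ℕ → ℝ) (b k : ℕ) (hb : 1 ≤ b) (hbk : b ≤ k) :
    ∑ j ∈ Icc b k, censoredRec f e k j = censoredRec f e b b := by
  induction k, hbk using Nat.le_induction with
  | base => simp
  | succ k hk ih =>
    rw [Finset.sum_Icc_succ_top (by omega)]
    have hdiff : ∑ j ∈ Icc b k, (censoredRec f e (k + 1) j - censoredRec f e k j)
        = -censoredRec f e (k + 1) (k + 1) := by
      rw [Finset.sum_eq_single k]
      · rw [censoredRec_succ_eq f e k (by omega)]; ring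
      · intro j hj hjk
        rw [censoredRec_succ_lt f e k j (by simp only [Finset.mem_Icc] at hj; omega)]
        ring
      · intro h; exact absurd (Finset.mem_Icc.2 ⟨hk, le_refl k⟩) h
    have := Finset.sum_sub_distrib (s := Icc b k)
      (f := fun j => censoredRec f e (k + 1) j) (g := fun j => censoredRec f e k j)
    rw [this, ih] at hdiff
    linarith [hdiff]

lemma censoredRec_val (f e : ℕ → ℝ) (b k : ℕ) (hb : 1 ≤ b) (hbk : b < k) :
    censoredRec f e k b
      = censoredRec f e b b - censoredRec f e (b + 1) (b + 1) := by
  induction k, hbk using Nat.le_induction with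
  | base => exact censoredRec_succ_eq f e b hb
  | succ k hk ih =>
    rw [censoredRec_succ_lt f e k b (by omega)]
    exact ih

lemma q_split (p : ℕ → ℝ) (b k : ℕ) (hbk : b ≤ k) :
    ∑ i ∈ Icc b k, p i = p b + ∑ i ∈ Icc (b + 1) k, p i := by
  have h : Finset.Icc b k = insert b (Finset.Icc (b + 1) k) := by
    ext x; simp only [Finset.mem_Icc, Finset.mem_insert]; omega
  rw [h, Finset.sum_insert (by simp only [Finset.mem_Icc]; omega)]

/-- Deterministic guarantees of the recursion on the good event. -/
lemma censoredRec_det (k : ℕ) (hk : 1 ≤ k) (p f e : ℕ → ℝ)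
    (hp0 : ∀ i ∈ Finset.Icc 1 k, 0 ≤ p i)
    (hp1 : ∑ i ∈ Finset.Icc 1 k, p i = 1)
    (he0 : ∀ c, 0 ≤ e c)
    (hgood : ∀ c ∈ Finset.Icc 1 k, |f c - ∑ b ∈ Finset.Icc c k, p b| ≤ e c) :
    (∀ c ∈ Finset.Icc 1 k,
        ∑ b ∈ Finset.Icc c k, p b ≤ censoredRec f e c c) ∧
    (∀ c ∈ Finset.Icc 1 k,
        |censoredRec f e c c - ∑ b ∈ Finset.Icc c k, p b| ≤ 2 * e c) := by
  have hlow : ∀ c, 1 ≤ c → c ≤ k → ∑ b ∈ Finset.Icc c k, p b ≤ censoredRec f e c c := by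
    intro c hc
    induction c, hc using Nat.le_induction with
    | base => intro _; rw [censoredRec_one, hp1]
    | succ c hc ih =>
      intro hck
      rw [censoredRec_succ_self f e c hc]
      have hq : ∑ b ∈ Finset.Icc (c + 1) k, p b ≤ ∑ b ∈ Finset.Icc c k, p b := by
        rw [q_split p c k (by omega)]
        have := hp0 c (Finset.mem_Icc.2 ⟨hc, by omega⟩)
        linarith
      refine le_min (hq.trans (ih (by omega))) ?_
      have := hgood (c + 1) (Finset.mem_Icc.2 ⟨by omega, hck⟩)
      have := abs_le.1 this
      linarith [this.1]
  constructor
  · intro c hc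
    rw [Finset.mem_Icc] at hc
    exact hlow c hc.1 hc.2
  · intro c hc
    rw [Finset.mem_Icc] at hc
    rcases Nat.lt_or_ge c 2 with h2 | h2
    · have hc1 : c = 1 := by omega
      subst hc1
      rw [censoredRec_one, hp1]
      simpa using mul_nonneg (by norm_num : (0:ℝ) ≤ 2) (he0 1)
    · obtain ⟨c', rfl⟩ : ∃ c', c = c' + 1 := ⟨c - 1, by omega⟩
      have hup : censoredRec f e (c' + 1) (c' + 1) ≤ f (c' + 1) + e (c' + 1) := by
        rw [censoredRec_succ_self f e c' (by omega)]
        exact min_le_right _ _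
      have hg := abs_le.1 (hgood (c' + 1) (Finset.mem_Icc.2 ⟨by omega, hc.2⟩))
      have hlo := hlow (c' + 1) (by omega) hc.2
      rw [abs_le]
      constructor <;> [linarith [he0 (c' + 1)]; linarith [hg.2]]

lemma censoredRec_tv (k : ℕ) (hk : 1 ≤ k) (p f e : ℕ → ℝ)
    (hp0 : ∀ i ∈ Finset.Icc 1 k, 0 ≤ p i)
    (hp1 : ∑ i ∈ Finset.Icc 1 k, p i = 1)
    (he0 : ∀ c, 0 ≤ e c)
    (hgood : ∀ c ∈ Finset.Icc 1 k, |f c - ∑ b ∈ Finset.Icc c k, p b| ≤ e c)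
    (c : ℕ) (hc1 : 1 ≤ c) (hck : c ≤ k)
    (s : ℝ) (hs : 0 < s) (hes : ∀ b ∈ Finset.Icc 1 c, e b ≤ s / 2) :
    (1 / 2) * ∑ b ∈ Finset.Icc 1 c,
        |truncAt (censoredRec f e k) k c b - truncAt p k c b| < k * s := by
  obtain ⟨det1, det2⟩ := censoredRec_det k hk p f e hp0 hp1 he0 hgood
  have hd : ∀ b, 1 ≤ b → b ≤ c → |censoredRec f e b b - ∑ i ∈ Finset.Icc b k, p i| ≤ s := by
    intro b hb1 hbc
    have h1 := det2 b (Finset.mem_Icc.2 ⟨hb1, hbc.trans hck⟩)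
    have h2 := hes b (Finset.mem_Icc.2 ⟨hb1, hbc⟩)
    linarith
  obtain ⟨c', rfl⟩ : ∃ c', c = c' + 1 := ⟨c - 1, by omega⟩
  rw [Finset.sum_Icc_succ_top (show 1 ≤ c' + 1 by omega)]
  have htop : |truncAt (censoredRec f e k) k (c' + 1) (c' + 1)
      - truncAt p k (c' + 1) (c' + 1)| ≤ s := by
    have h1 : truncAt (censoredRec f e k) k (c' + 1) (c' + 1)
        = censoredRec f e (c' + 1) (c' + 1) := by
      rw [truncAt, if_pos rfl]
      exact censoredRec_tail f e (c' + 1) k hc1 hck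
    have h2 : truncAt p k (c' + 1) (c' + 1) = ∑ i ∈ Finset.Icc (c' + 1) k, p i := by
      rw [truncAt, if_pos rfl]
    rw [h1, h2]
    exact hd (c' + 1) hc1 (le_refl _)
  have hmid : ∀ b ∈ Finset.Icc 1 c',
      |truncAt (censoredRec f e k) k (c' + 1) b - truncAt p k (c' + 1) b| ≤ 2 * s := by
    intro b hb
    rw [Finset.mem_Icc] at hb
    have hbne : b ≠ c' + 1 := by omega
    rw [truncAt, truncAt, if_neg hbne, if_neg hbne]
    rw [censoredRec_val f e b k hb.1 (by omega)]
    have hpb : p b = (∑ i ∈ Finset.Icc b k, p i) - ∑ i ∈ Finset.Icc (b + 1) k, p i := by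
      rw [q_split p b k (by omega)]; ring
    rw [hpb]
    have h1 := hd b hb.1 (by omega)
    have h2 := hd (b + 1) (by omega) (by omega)
    calc |censoredRec f e b b - censoredRec f e (b + 1) (b + 1)
          - ((∑ i ∈ Finset.Icc b k, p i) - ∑ i ∈ Finset.Icc (b + 1) k, p i)|
        ≤ |censoredRec f e b b - ∑ i ∈ Finset.Icc b k, p i|
          + |censoredRec f e (b + 1) (b + 1) - ∑ i ∈ Finset.Icc (b + 1) k, p i| := by
          rw [show censoredRec f e b b - censoredRec f e (b + 1) (b + 1)
              - ((∑ i ∈ Finset.Icc b k, p i) - ∑ i ∈ Finset.Icc (b + 1) k, p i)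
              = (censoredRec f e b b - ∑ i ∈ Finset.Icc b k, p i)
                - (censoredRec f e (b + 1) (b + 1) - ∑ i ∈ Finset.Icc (b + 1) k, p i) by ring]
          exact abs_sub _ _
    _ ≤ 2 * s := by linarith
  have hsum : ∑ b ∈ Finset.Icc 1 c',
      |truncAt (censoredRec f e k) k (c' + 1) b - truncAt p k (c' + 1) b| ≤ c' * (2 * s) := by
    have := Finset.sum_le_card_nsmul (Finset.Icc 1 c') _ (2 * s) hmid
    rwa [Nat.card_Icc, nsmul_eq_mul, show c' + 1 - 1 = c' from rfl] at this
  have hck' : (c' : ℝ) + 1 ≤ (k : ℝ) := by exact_mod_cast hck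
  calc (1 / 2) * (∑ b ∈ Finset.Icc 1 c',
        |truncAt (censoredRec f e k) k (c' + 1) b - truncAt p k (c' + 1) b|
        + |truncAt (censoredRec f e k) k (c' + 1) (c' + 1)
            - truncAt p k (c' + 1) (c' + 1)|)
      ≤ (1 / 2) * (c' * (2 * s) + s) := by
        have := add_le_add hsum htop
        linarith
  _ = c' * s + s / 2 := by ring
  _ < (c' + 1) * s := by nlinarith
  _ ≤ k * s := by nlinarith

end Aux


/-- sampling under censored feedback. Let `D` be a distribution on
values `a_1 < ⋯ < a_k` with pmf `p`. For each level `c ∈ [k]` we observe `m_c` i.i.d.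
censored samples `Y c j ~ min(X, a_c)` with `X ~ D`, all mutually independent.
With `n_c = ∑_{b ≥ c} m_b` effective samples at level `c`, `phat_c` the fraction of the
`n_c` effective samples equal to `a_c` (i.e. whose underlying value is `≥ a_c`), and
`eps_c = √(log(2k/δ)/(2 n_c))`, let `E = E_k` be the output of the censored-feedback
recursion. Then with probability at least `1 - δ`: (i) `E` stochastically dominates `p`,
and (ii) for every `c ∈ [k]`, the total variation distance between the truncations at
`a_c` of `E` and of `p` is less than `k √(2 log(2k/δ)/m_c)`. -/


theorem censoredRec_sampling_dominates_and_close
    (Ω : Type*) [MeasurableSpace Ω] (P : Measure Ω) [IsProbabilityMeasure P]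
    (k : ℕ) (hk : 1 ≤ k)
    (a : ℕ → ℝ) (ha : ∀ i ∈ Finset.Icc 1 k, ∀ j ∈ Finset.Icc 1 k, i < j → a i < a j)
    (p : ℕ → ℝ)
    (hp : ∀ i ∈ Finset.Icc 1 k, 0 ≤ p i ∧ p i ≤ 1)
    (hp1 : ∑ i ∈ Finset.Icc 1 k, p i = 1)
    (m : ℕ → ℕ) (hm : ∀ c ∈ Finset.Icc 1 k, 1 ≤ m c)
    (Y : ℕ → ℕ → Ω → ℝ) (hYmeas : ∀ c j, Measurable (Y c j))
    (hYindep : iIndepFun (fun cj : ℕ × ℕ => Y cj.1 cj.2) P)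
    (hYdist : ∀ c ∈ Finset.Icc 1 k, ∀ j ∈ Finset.range (m c),
      Measure.map (Y c j) P
        = ∑ i ∈ Finset.Icc 1 c, ENNReal.ofReal (truncAt p k c i) • Measure.dirac (a i))
    (δ : ℝ) (hδ0 : 0 < δ) (hδ1 : δ < 1)
    (n : ℕ → ℕ) (hn : ∀ c, n c = ∑ b ∈ Finset.Icc c k, m b)
    (phat : Ω → ℕ → ℝ)
    (hphat : ∀ ω c, phat ω c
      = (1 / (n c : ℝ)) *
          ∑ b ∈ Finset.Icc c k, ∑ j ∈ Finset.range (m b),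
            (if a c ≤ Y b j ω then (1 : ℝ) else 0))
    (eps : ℕ → ℝ)
    (heps : ∀ c, eps c = Real.sqrt (Real.log (2 * k / δ) / (2 * (n c : ℝ))))
    (E : Ω → ℕ → ℝ) (hE : ∀ ω, E ω = censoredRec (phat ω) eps k) :
    ENNReal.ofReal (1 - δ) ≤
      P {ω | (∀ b ∈ Finset.Icc 1 k,
                ∑ j ∈ Finset.Icc b k, p j ≤ ∑ j ∈ Finset.Icc b k, E ω j) ∧
             (∀ c ∈ Finset.Icc 1 k,
                (1 / 2) * ∑ b ∈ Finset.Icc 1 c, |truncAt (E ω) k c b - truncAt p k c b|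
                  < k * Real.sqrt (2 * Real.log (2 * k / δ) / (m c : ℝ)))} := by
  classical
  have hk0 : (0:ℝ) < k := by exact_mod_cast hk
  have hk1 : (1:ℝ) ≤ k := by exact_mod_cast hk
  have hLpos : 0 < Real.log (2 * k / δ) := by
    apply Real.log_pos
    rw [lt_div_iff₀ hδ0, one_mul]
    linarith
  set L : ℝ := Real.log (2 * k / δ) with hLdef
  have hp0 : ∀ i ∈ Finset.Icc 1 k, 0 ≤ p i := fun i hi => (hp i hi).1
  have hq0 : ∀ c ∈ Finset.Icc 1 k, 0 ≤ ∑ b ∈ Finset.Icc c k, p b := by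
    intro c hc
    rw [Finset.mem_Icc] at hc
    refine Finset.sum_nonneg fun i hi => ?_
    rw [Finset.mem_Icc] at hi
    exact hp0 i (Finset.mem_Icc.2 ⟨le_trans hc.1 hi.1, hi.2⟩)
  have hq1 : ∀ c ∈ Finset.Icc 1 k, ∑ b ∈ Finset.Icc c k, p b ≤ 1 := by
    intro c hc
    rw [Finset.mem_Icc] at hc
    rw [← hp1]
    refine Finset.sum_le_sum_of_subset_of_nonneg ?_ (fun i hi _ => hp0 i hi)
    intro i hi
    rw [Finset.mem_Icc] at hi ⊢
    omega
  have hmn : ∀ b c, 1 ≤ b → b ≤ c → c ≤ k → m c ≤ n b := by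
    intro b c hb hbc hck
    rw [hn]
    exact Finset.single_le_sum (f := m) (fun i _ => Nat.zero_le _)
      (Finset.mem_Icc.2 ⟨hbc, hck⟩)
  have hnpos : ∀ c, 1 ≤ c → c ≤ k → 1 ≤ n c := by
    intro c h1 h2
    exact le_trans (hm c (Finset.mem_Icc.2 ⟨h1, h2⟩)) (hmn c c h1 (le_refl c) h2)
  have heps0 : ∀ c, 0 ≤ eps c := fun c => by rw [heps]; exact Real.sqrt_nonneg _
  -- indicator random variables and index sets
  set X : ℕ → ℕ × ℕ → Ω → ℝ :=
    fun c bj ω => if a c ≤ Y bj.1 bj.2 ω then (1:ℝ) else 0 with hXdef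
  set T : ℕ → Finset (ℕ × ℕ) :=
    fun c => (Finset.Icc c k).biUnion
      (fun b => (Finset.range (m b)).image (fun j => (b, j))) with hTdef
  have hTdisj : ∀ c, ∀ b1 ∈ Finset.Icc c k, ∀ b2 ∈ Finset.Icc c k, b1 ≠ b2 →
      Disjoint ((Finset.range (m b1)).image (fun j => (b1, j)))
        ((Finset.range (m b2)).image (fun j => (b2, j))) := by
    intro c b1 _ b2 _ hne
    rw [Finset.disjoint_left]
    intro x hx1 hx2
    obtain ⟨j1, _, rfl⟩ := Finset.mem_image.1 hx1
    obtain ⟨j2, _, hx⟩ := Finset.mem_image.1 hx2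
    exact hne ((Prod.ext_iff.1 hx.symm).1)
  have hTcard : ∀ c, (T c).card = n c := by
    intro c
    rw [hTdef, Finset.card_biUnion (hTdisj c), hn]
    refine Finset.sum_congr rfl fun b _ => ?_
    rw [Finset.card_image_of_injective _ (fun x y h => (Prod.ext_iff.1 h).2),
      Finset.card_range]
  have hTsum : ∀ c ω, ∑ bj ∈ T c, X c bj ω
      = ∑ b ∈ Finset.Icc c k, ∑ j ∈ Finset.range (m b),
          (if a c ≤ Y b j ω then (1:ℝ) else 0) := by
    intro c ω
    rw [hTdef, Finset.sum_biUnion]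
    · refine Finset.sum_congr rfl fun b _ => ?_
      rw [Finset.sum_image (fun x _ y _ h => (Prod.ext_iff.1 h).2)]
    · intro b1 h1 b2 h2 hne
      exact hTdisj c b1 h1 b2 h2 hne
  have hXmeas : ∀ c bj, Measurable (X c bj) := by
    intro c bj
    exact Measurable.ite (measurableSet_le measurable_const (hYmeas bj.1 bj.2))
      measurable_const measurable_const
  have hXind : ∀ c, iIndepFun (X c) P := by
    intro c
    have := hYindep.comp (fun _ (y : ℝ) => if a c ≤ y then (1:ℝ) else 0)
      (fun _ => Measurable.ite (measurableSet_le measurable_const measurable_id)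
        measurable_const measurable_const)
    exact this
  have hX01 : ∀ c bj ω, 0 ≤ X c bj ω ∧ X c bj ω ≤ 1 := by
    intro c bj ω
    constructor <;> · simp only [hXdef]; split <;> norm_num
  -- mgf of each indicator
  have hXmgf : ∀ c, c ∈ Finset.Icc 1 k → ∀ bj ∈ T c, ∀ t : ℝ,
      mgf (X c bj) P t
        = (1 - ∑ b ∈ Finset.Icc c k, p b) + (∑ b ∈ Finset.Icc c k, p b) * Real.exp t := by
    intro c hc bj hbj t
    have hcm := hc
    rw [Finset.mem_Icc] at hc
    rw [hTdef] at hbj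
    simp only [Finset.mem_biUnion, Finset.mem_image, Finset.mem_range] at hbj
    obtain ⟨b, hb, j, hj, rfl⟩ := hbj
    rw [Finset.mem_Icc] at hb
    have hb1 : 1 ≤ b := le_trans hc.1 hb.1
    have hwnn : ∀ i ∈ Finset.Icc 1 b, 0 ≤ truncAt p k b i := by
      intro i hi
      rw [Finset.mem_Icc] at hi
      rw [truncAt]
      split
      · exact hq0 b (Finset.mem_Icc.2 ⟨hb1, hb.2⟩)
      · exact hp0 i (Finset.mem_Icc.2 ⟨hi.1, le_trans hi.2 hb.2⟩)
    have hmap := hYdist b (Finset.mem_Icc.2 ⟨hb1, hb.2⟩) j (Finset.mem_range.2 hj)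
    have hmgfeq := mgf_indicator_eq (P := P) (hYmeas b j) hwnn hmap (a c) t
    have hXeq : X c (b, j) = fun ω => if a c ≤ Y b j ω then (1:ℝ) else 0 := rfl
    rw [hXeq, hmgfeq]
    have hsplit : Finset.Icc 1 b = Finset.Icc 1 (c - 1) ∪ Finset.Icc c b := by
      ext y; simp only [Finset.mem_Icc, Finset.mem_union]; omega
    have hdisj : Disjoint (Finset.Icc 1 (c - 1)) (Finset.Icc c b) := by
      rw [Finset.disjoint_left]
      intro y hy1 hy2
      simp only [Finset.mem_Icc] at hy1 hy2
      omega
    rw [hsplit, Finset.sum_union hdisj]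
    have h1 : ∀ i ∈ Finset.Icc 1 (c - 1),
        truncAt p k b i * Real.exp (t * (if a c ≤ a i then (1:ℝ) else 0))
          = truncAt p k b i := by
      intro i hi
      rw [Finset.mem_Icc] at hi
      have hia : ¬ a c ≤ a i := by
        refine not_le.2 (ha i (Finset.mem_Icc.2 ⟨hi.1, by omega⟩) c hcm (by omega))
      rw [if_neg hia, mul_zero, Real.exp_zero, mul_one]
    have h2 : ∀ i ∈ Finset.Icc c b,
        truncAt p k b i * Real.exp (t * (if a c ≤ a i then (1:ℝ) else 0))
          = truncAt p k b i * Real.exp t := by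
      intro i hi
      rw [Finset.mem_Icc] at hi
      have hia : a c ≤ a i := by
        rcases eq_or_lt_of_le hi.1 with h | h
        · rw [h]
        · exact (ha c hcm i (Finset.mem_Icc.2 ⟨le_trans hc.1 hi.1, le_trans hi.2 hb.2⟩) h).le
      rw [if_pos hia, mul_one]
    rw [Finset.sum_congr rfl h1, Finset.sum_congr rfl h2, ← Finset.sum_mul]
    rw [truncAt_sum_head p k c b hc.1 hb.1, truncAt_sum_tail p k c b hc.1 hb.1 hb.2]
    have hsum : ∑ i ∈ Finset.Icc 1 (c - 1), p i + ∑ i ∈ Finset.Icc c k, p i = 1 := by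
      rw [← Finset.sum_union (by
        rw [Finset.disjoint_left]
        intro y hy1 hy2
        simp only [Finset.mem_Icc] at hy1 hy2
        omega)]
      rw [show Finset.Icc 1 (c - 1) ∪ Finset.Icc c k = Finset.Icc 1 k by
        ext y; simp only [Finset.mem_Icc, Finset.mem_union]; omega]
      exact hp1
    linear_combination hsum
  -- per-level tail bounds
  have hbad : ∀ c ∈ Finset.Icc 1 k,
      P {ω | (n c : ℝ) * ((∑ b ∈ Finset.Icc c k, p b) + eps c) ≤ ∑ bj ∈ T c, X c bj ω}
        ≤ ENNReal.ofReal (δ / (2 * k)) ∧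
      P {ω | ∑ bj ∈ T c, X c bj ω ≤ (n c : ℝ) * ((∑ b ∈ Finset.Icc c k, p b) - eps c)}
        ≤ ENNReal.ofReal (δ / (2 * k)) := by
    intro c hcm
    have hc := hcm
    rw [Finset.mem_Icc] at hc
    have hq0c := hq0 c hcm
    have hq1c := hq1 c hcm
    have hch := chernoff_bernoulli (hXind c) (hXmeas c)
      (fun bj ω => (hX01 c bj ω).1) (fun bj ω => (hX01 c bj ω).2) (T c) hq0c hq1c
      (fun bj hbj t => hXmgf c hcm bj hbj t) (heps0 c)
    rw [hTcard] at hch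
    have hnc1 : (1:ℝ) ≤ (n c : ℝ) := by exact_mod_cast hnpos c hc.1 hc.2
    have hexp : Real.exp (-(2 * (n c:ℝ) * eps c ^ 2)) = δ / (2 * k) := by
      have heq : eps c ^ 2 = L / (2 * (n c : ℝ)) := by
        rw [heps]
        rw [Real.sq_sqrt (by positivity)]
      rw [heq, show -(2 * (n c:ℝ) * (L / (2 * (n c:ℝ)))) = -L by field_simp]
      rw [Real.exp_neg, hLdef, Real.exp_log (by positivity), inv_div]
    rw [hexp] at hch
    exact hch
  -- the good event
  set G : Set Ω :=
    {ω | ∀ c ∈ Finset.Icc 1 k, |phat ω c - ∑ b ∈ Finset.Icc c k, p b| ≤ eps c} with hGdef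
  have hGsub : G ⊆ {ω | (∀ b ∈ Finset.Icc 1 k,
                ∑ j ∈ Finset.Icc b k, p j ≤ ∑ j ∈ Finset.Icc b k, E ω j) ∧
             (∀ c ∈ Finset.Icc 1 k,
                (1 / 2) * ∑ b ∈ Finset.Icc 1 c, |truncAt (E ω) k c b - truncAt p k c b|
                  < k * Real.sqrt (2 * L / (m c : ℝ)))} := by
    intro ω hω
    simp only [hGdef, Set.mem_setOf_eq] at hω
    simp only [Set.mem_setOf_eq]
    obtain ⟨det1, det2⟩ := censoredRec_det k hk p (phat ω) eps hp0 hp1 heps0 hω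
    constructor
    · intro b hb
      have hbm := hb
      rw [Finset.mem_Icc] at hb
      have htail := censoredRec_tail (phat ω) eps b k hb.1 hb.2
      simp only [hE]
      rw [htail]
      exact det1 b hbm
    · intro c hc
      have hcm := hc
      rw [Finset.mem_Icc] at hc
      have hmc1 : (1:ℝ) ≤ (m c : ℝ) := by exact_mod_cast hm c hcm
      have hs : 0 < Real.sqrt (2 * L / (m c : ℝ)) := Real.sqrt_pos.2 (by positivity)
      have hsqrt : Real.sqrt (2 * L / (m c : ℝ)) = 2 * Real.sqrt (L / (2 * (m c : ℝ))) := by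
        rw [show 2 * L / (m c:ℝ) = 4 * (L / (2 * (m c : ℝ))) by field_simp; ring]
        rw [Real.sqrt_mul (by norm_num : (0:ℝ) ≤ 4)]
        congr 1
        rw [show (4:ℝ) = 2 ^ 2 by norm_num, Real.sqrt_sq (by norm_num : (0:ℝ) ≤ 2)]
      have hes : ∀ b ∈ Finset.Icc 1 c, eps b ≤ Real.sqrt (2 * L / (m c : ℝ)) / 2 := by
        intro b hb
        rw [Finset.mem_Icc] at hb
        have hmn' : (m c : ℝ) ≤ (n b : ℝ) := by exact_mod_cast hmn b c hb.1 hb.2 hc.2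
        rw [heps, hsqrt, mul_div_cancel_left₀ _ (by norm_num : (2:ℝ) ≠ 0)]
        apply Real.sqrt_le_sqrt
        apply div_le_div_of_nonneg_left hLpos.le (by positivity) (by linarith)
      have htv := censoredRec_tv k hk p (phat ω) eps hp0 hp1 heps0 hω c hc.1 hc.2
        (Real.sqrt (2 * L / (m c : ℝ))) hs hes
      simp only [hE]
      exact htv
  -- probability of the bad event
  have hPGc : P Gᶜ ≤ ENNReal.ofReal δ := by
    have hsubset : Gᶜ ⊆ ⋃ c ∈ Finset.Icc 1 k,
        ({ω | (n c:ℝ) * ((∑ b ∈ Finset.Icc c k, p b) + eps c) ≤ ∑ bj ∈ T c, X c bj ω}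
          ∪ {ω | ∑ bj ∈ T c, X c bj ω ≤ (n c:ℝ) * ((∑ b ∈ Finset.Icc c k, p b) - eps c)}) := by
      intro ω hω
      simp only [hGdef, Set.mem_compl_iff, Set.mem_setOf_eq] at hω
      push_neg at hω
      obtain ⟨c, hcm, hgt⟩ := hω
      have hc := hcm
      rw [Finset.mem_Icc] at hc
      refine Set.mem_iUnion₂.2 ⟨c, hcm, ?_⟩
      have hn0 : (0:ℝ) < n c := by
        have := hnpos c hc.1 hc.2
        exact_mod_cast Nat.lt_of_lt_of_le Nat.zero_lt_one this
      have hS : ∑ bj ∈ T c, X c bj ω = (n c:ℝ) * phat ω c := by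
        rw [hTsum c ω, hphat ω c]
        field_simp
      rcases lt_abs.1 hgt with h | h
      · left
        simp only [Set.mem_setOf_eq]
        rw [hS]
        have hpq : (∑ b ∈ Finset.Icc c k, p b) + eps c ≤ phat ω c := by linarith
        exact mul_le_mul_of_nonneg_left hpq hn0.le
      · right
        simp only [Set.mem_setOf_eq]
        rw [hS]
        have hpq : phat ω c ≤ (∑ b ∈ Finset.Icc c k, p b) - eps c := by linarith
        exact mul_le_mul_of_nonneg_left hpq hn0.le
    calc P Gᶜ ≤ P (⋃ c ∈ Finset.Icc 1 k,
        ({ω | (n c:ℝ) * ((∑ b ∈ Finset.Icc c k, p b) + eps c) ≤ ∑ bj ∈ T c, X c bj ω}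
          ∪ {ω | ∑ bj ∈ T c, X c bj ω ≤ (n c:ℝ) * ((∑ b ∈ Finset.Icc c k, p b) - eps c)})) :=
        measure_mono hsubset
    _ ≤ ∑ c ∈ Finset.Icc 1 k, P
        ({ω | (n c:ℝ) * ((∑ b ∈ Finset.Icc c k, p b) + eps c) ≤ ∑ bj ∈ T c, X c bj ω}
          ∪ {ω | ∑ bj ∈ T c, X c bj ω ≤ (n c:ℝ) * ((∑ b ∈ Finset.Icc c k, p b) - eps c)}) :=
        measure_biUnion_finset_le _ _
    _ ≤ ∑ c ∈ Finset.Icc 1 k, ENNReal.ofReal (δ / k) := by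
        refine Finset.sum_le_sum fun c hcm => ?_
        refine (measure_union_le _ _).trans ?_
        refine (add_le_add (hbad c hcm).1 (hbad c hcm).2).trans ?_
        rw [← ENNReal.ofReal_add (by positivity) (by positivity)]
        apply ENNReal.ofReal_le_ofReal
        rw [show δ / (2 * k) + δ / (2 * k) = δ / k by field_simp; ring]
    _ = ENNReal.ofReal δ := by
        rw [Finset.sum_const, Nat.card_Icc, nsmul_eq_mul]
        rw [show k + 1 - 1 = k from rfl]
        rw [← ENNReal.ofReal_natCast k, ← ENNReal.ofReal_mul (by positivity)]
        congr 1
        field_simp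
  -- conclude
  have h1 : (1 : ENNReal) ≤ P G + P Gᶜ := by
    have huniv : P Set.univ = 1 := measure_univ
    rw [← huniv, ← Set.union_compl_self G]
    exact measure_union_le _ _
  have h2 : ENNReal.ofReal (1 - δ) + ENNReal.ofReal δ = 1 := by
    rw [← ENNReal.ofReal_add (by linarith) hδ0.le]
    norm_num
  have h3 : ENNReal.ofReal (1 - δ) + ENNReal.ofReal δ ≤ P G + ENNReal.ofReal δ := by
    rw [h2]
    exact h1.trans (add_le_add_right hPGc _)
  have h4 : ENNReal.ofReal (1 - δ) ≤ P G :=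
    (ENNReal.add_le_add_iff_right ENNReal.ofReal_ne_top).1 h3
  exact h4.trans (measure_mono hGsub)
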